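/- Any lattice polytope of degree 0 or 1 is normal. -/

import Mathlib

open Finset Pointwise

noncomputable section

/-- Lattice points: `ZL N = ℤ^N`. -/
abbrev ZL (N : ℕ) := Fin N → ℤ

/-- Embedding of the lattice into `ℝ^N`. -/
def toR {N : ℕ} (x : ZL N) : Fin N → ℝ := fun i => (x i : ℝ)

/-- The lattice polytope spanned by a finite set `V` of lattice points. -/
def poly {N : ℕ} (V : Finset (ZL N)) : Set (Fin N → ℝ) :=
  convexHull ℝ (toR '' (V : Set (ZL N)))

/-- The lattice points of the dilate `k • P`. -/
def latPts {N : ℕ} (V : Finset (ZL N)) (k : ℕ) : Set (ZL N) :=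
  {x | toR x ∈ (k : ℝ) • poly V}

/-- `P` is `k`-normal: every lattice point of `kP` is a sum of `k` lattice points of `P`. -/
def kNormal {N : ℕ} (V : Finset (ZL N)) (k : ℕ) : Prop :=
  ∀ x ∈ latPts V k, ∃ f : Fin k → ZL N, (∀ i, f i ∈ latPts V 1) ∧ ∑ i, f i = x

/-- `P` is normal. -/
def NormalPoly {N : ℕ} (V : Finset (ZL N)) : Prop := ∀ k, 1 ≤ k → kNormal V k

/-- The set of which `d_P` is the least element. -/
def dSet {N : ℕ} (V : Finset (ZL N)) : Set ℕ :=
  {n | 0 < n ∧ ∀ k ≥ n, latPts V (k + 1) = latPts V 1 + latPts V k}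

/-- The set of which the `k`-normality threshold `k_P` is the least element. -/
def kSet {N : ℕ} (V : Finset (ZL N)) : Set ℕ :=
  {K | 0 < K ∧ ∀ k ≥ K, kNormal V k}

/-- The set of which `ν_P` is the least element. -/
def nuSet {N : ℕ} (V : Finset (ZL N)) : Set ℕ :=
  {n | 0 < n ∧ ∀ k ≥ n, latPts V (k + 1) = (V : Set (ZL N)) + latPts V k}

/-- `v` is a vertex of `P`. -/
def IsVertex {N : ℕ} (V : Finset (ZL N)) (v : ZL N) : Prop :=
  v ∈ V ∧ toR v ∈ Set.extremePoints ℝ (poly V)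

/-- `P` is very ample: for every vertex `v`, every lattice point of the cone
`ℝ_{≥0}(P - v)` is a finite sum of elements `w - v` with `w ∈ P ∩ M`. -/
def VeryAmple {N : ℕ} (V : Finset (ZL N)) : Prop :=
  ∀ v, IsVertex V v → ∀ u : ZL N,
    (∃ c : ℝ, 0 ≤ c ∧ ∃ p ∈ poly V, toR u = c • (p - toR v)) →
    ∃ (m : ℕ) (w : Fin m → ZL N), (∀ i, w i ∈ latPts V 1) ∧ u = ∑ i, (w i - v)

/-- The set of numbers `m` such that `x - d_P v` is a sum of `m` elements of `(P ∩ M) - v`;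
`σ(x, d_P v)` is its least element. -/
def sigmaSet {N : ℕ} (V : Finset (ZL N)) (dP : ℕ) (x v : ZL N) : Set ℕ :=
  {m | ∃ w : Fin m → ZL N, (∀ i, w i ∈ latPts V 1) ∧ x - dP • v = ∑ i, (w i - v)}

/-- The set of all values `σ(x, d_P v)`; `m_P` is its greatest element. -/
def mSet {N : ℕ} (V : Finset (ZL N)) (dP : ℕ) : Set ℕ :=
  {s | ∃ x ∈ latPts V dP, ∃ v, IsVertex V v ∧ IsLeast (sigmaSet V dP x v) s}

end

set_option maxHeartbeats 1000000 in
theorem aux_mem_intrinsicInterior {N : ℕ} (Z : Set (Fin N → ℝ)) {ι : Type*} [Fintype ι]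
    [Nonempty ι] (z : ι → Fin N → ℝ) (hz : Set.range z ⊆ Z) (w : ι → ℝ) (hw : ∀ i, 0 < w i)
    {k : ℝ} (hk : 0 < k) (hsum : ∑ i, w i = k)
    (hspan : affineSpan ℝ (Set.range z) = affineSpan ℝ Z) :
    (∑ i, w i • z i) ∈ intrinsicInterior ℝ (k • convexHull ℝ Z) := by
  classical
  set s : Set (Fin N → ℝ) := k • convexHull ℝ Z with hs
  set c : Fin N → ℝ := ∑ i, w i • z i with hc
  -- generic fact: positive combos with given total k lie in s
  have key : ∀ (v : ι → ℝ), (∀ i, 0 ≤ v i) → (∑ i, v i = k) → (∑ i, v i • z i) ∈ s := by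
    intro v hv0 hvsum
    have hq : Finset.univ.centerMass v z ∈ convexHull ℝ Z :=
      Finset.centerMass_mem_convexHull _ (fun i _ => hv0 i) (by rw [hvsum]; exact hk)
        (fun i _ => hz (Set.mem_range_self i))
    have hcm : Finset.univ.centerMass v z = k⁻¹ • ∑ i, v i • z i := by
      rw [Finset.centerMass, hvsum]
    refine Set.mem_smul_set.2 ⟨Finset.univ.centerMass v z, hq, ?_⟩
    rw [hcm, smul_smul, mul_inv_cancel₀ hk.ne', one_smul]
  have hcs : c ∈ s := key w (fun i => (hw i).le) hsum
  set A := affineSpan ℝ s with hA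
  have hcA : c ∈ A := subset_affineSpan ℝ _ hcs
  obtain ⟨i₀⟩ := ‹Nonempty ι›
  set D : Submodule ℝ (Fin N → ℝ) := Submodule.span ℝ (Set.range fun i => z i - z i₀) with hD
  -- direction of A is contained in D
  have hDZ : vectorSpan ℝ Z ≤ D := by
    have h1 : vectorSpan ℝ Z = vectorSpan ℝ (Set.range z) := by
      rw [← direction_affineSpan, ← hspan, direction_affineSpan]
    rw [h1, vectorSpan_eq_span_vsub_set_right ℝ (Set.mem_range_self i₀)]
    apply Submodule.span_le.2
    rintro _ ⟨_, ⟨i, rfl⟩, rfl⟩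
    exact Submodule.subset_span ⟨i, rfl⟩
  have hdir : A.direction ≤ D := by
    have h2 : s = convexHull ℝ (k • Z) := by rw [convexHull_smul]
    have h3 : vectorSpan ℝ ((convexHull ℝ) (k • Z)) = vectorSpan ℝ (k • Z) := by
      rw [← direction_affineSpan, affineSpan_convexHull, direction_affineSpan]
    rw [hA, h2, direction_affineSpan, h3]
    have hzZ : z i₀ ∈ Z := hz (Set.mem_range_self i₀)
    rw [vectorSpan_eq_span_vsub_set_right ℝ (Set.smul_mem_smul_set hzZ : k • z i₀ ∈ k • Z)]
    apply Submodule.span_le.2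
    rintro _ ⟨_, ⟨y, hy, rfl⟩, rfl⟩
    have h4 : y -ᵥ z i₀ ∈ D := hDZ (vsub_mem_vectorSpan ℝ hy hzZ)
    have h5 := Submodule.smul_mem D k h4
    simpa [vsub_eq_sub, smul_sub] using h5
  -- the linear map from weights to vectors
  set T : (ι → ℝ) →ₗ[ℝ] (Fin N → ℝ) := Fintype.linearCombination ℝ (fun i => z i - z i₀) with hT
  have hTval : ∀ δ : ι → ℝ, T δ = ∑ i, δ i • (z i - z i₀) := fun δ => rfl
  have hTrange : LinearMap.range T = D := Fintype.range_linearCombination ℝ _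
  set Tc : (ι → ℝ) →ₗ[ℝ] D := T.codRestrict D (fun δ => hTrange ▸ LinearMap.mem_range_self T δ)
    with hTc
  have hTcsurj : LinearMap.range Tc = ⊤ := by
    rw [LinearMap.range_eq_top]
    rintro ⟨v, hv⟩
    rw [← hTrange] at hv
    obtain ⟨δ, hδ⟩ := hv
    exact ⟨δ, Subtype.ext hδ⟩
  obtain ⟨g, hg⟩ := Tc.exists_rightInverse_of_surjective hTcsurj
  have hg' : ∀ v : D, T (g v) = (v : Fin N → ℝ) := by
    intro v
    have := LinearMap.ext_iff.1 hg v
    simpa [hTc, LinearMap.codRestrict] using congrArg Subtype.val this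
  have hgc : Continuous g := g.continuous_of_finiteDimensional
  -- bounds
  set n := Fintype.card ι with hn
  have hn1 : 1 ≤ n := Fintype.card_pos
  set wmin : ℝ := Finset.univ.inf' Finset.univ_nonempty w with hwmin
  have hwminpos : 0 < wmin := by
    rw [hwmin, Finset.lt_inf'_iff]
    exact fun i _ => hw i
  have hwminle : ∀ i, wmin ≤ w i := fun i => Finset.inf'_le _ (Finset.mem_univ i)
  set b : ℝ := wmin / (n + 1) with hb
  have hbpos : 0 < b := div_pos hwminpos (by positivity)
  -- continuity of g at 0 gives ε
  obtain ⟨ε, hεpos, hε⟩ : ∃ ε > 0, ∀ v : D, ‖v‖ < ε → ‖g v‖ < b := by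
    have hca : ContinuousAt g 0 := hgc.continuousAt
    rw [Metric.continuousAt_iff] at hca
    obtain ⟨δ', hδ'pos, hδ'⟩ := hca b hbpos
    refine ⟨δ', hδ'pos, fun v hv => ?_⟩
    have h2 := hδ' (x := v) (by simpa [dist_eq_norm] using hv)
    simpa [dist_eq_norm, map_zero g] using h2
  -- the ball property
  have hball : ∀ u : Fin N → ℝ, u ∈ A → ‖u - c‖ < ε → u ∈ s := by
    intro u huA hun
    have hvd : u - c ∈ A.direction := by
      have := AffineSubspace.vsub_mem_direction huA hcA
      simpa using this
    have hvD : u - c ∈ D := hdir hvd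
    set δ : ι → ℝ := g ⟨u - c, hvD⟩ with hδdef
    have hδsmall : ∀ i, |δ i| < b := by
      intro i
      have h1 : ‖δ‖ < b := hε _ (by simpa using hun)
      calc |δ i| = ‖δ i‖ := (Real.norm_eq_abs _).symm
        _ ≤ ‖δ‖ := norm_le_pi_norm δ i
        _ < b := h1
    have hTδ : ∑ i, δ i • (z i - z i₀) = u - c := by
      rw [← hTval]; exact hg' ⟨u - c, hvD⟩
    set S : ℝ := ∑ i, δ i with hS
    have hSsmall : |S| < n * b := by
      calc |S| ≤ ∑ i, |δ i| := Finset.abs_sum_le_sum_abs _ _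
        _ < ∑ _i : ι, b := Finset.sum_lt_sum_of_nonempty Finset.univ_nonempty
            (fun i _ => hδsmall i)
        _ = n * b := by rw [Finset.sum_const, nsmul_eq_mul, hn, Finset.card_univ]
    set w' : ι → ℝ := fun i => w i + δ i - (if i = i₀ then S else 0) with hw'
    have hw'pos : ∀ i, 0 < w' i := by
      intro i
      have h1 : -b < δ i := neg_lt_of_abs_lt (hδsmall i)
      have h2 : |if i = i₀ then S else 0| ≤ |S| := by
        split <;> simp [abs_nonneg]
      have h3 : (if i = i₀ then S else 0) < n * b := lt_of_le_of_lt (le_abs_self _ |>.trans h2) hSsmall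
      have h4 : wmin = (n + 1) * b := by
        rw [hb, mul_div_cancel₀]
        positivity
      have := hwminle i
      simp only [hw']
      nlinarith [hwminle i]
    have hw'sum : ∑ i, w' i = k := by
      simp only [hw']
      rw [Finset.sum_sub_distrib, Finset.sum_add_distrib, Finset.sum_ite_eq' Finset.univ i₀]
      simp [hsum, hS]
    have hw'pt : ∑ i, w' i • z i = u := by
      have e1 : ∀ i, w' i • z i = w i • z i + δ i • z i - (if i = i₀ then S • z i₀ else 0) := by
        intro i
        by_cases h : i = i₀
        · subst h; simp [hw', sub_smul, add_smul]
        · simp [hw', h, sub_smul, add_smul]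
      rw [Finset.sum_congr rfl (fun i _ => e1 i), Finset.sum_sub_distrib, Finset.sum_add_distrib,
        Finset.sum_ite_eq' Finset.univ i₀, if_pos (Finset.mem_univ i₀)]
      have h5 : ∑ i, δ i • z i - S • z i₀ = u - c := by
        rw [← hTδ]
        simp only [smul_sub]
        rw [Finset.sum_sub_distrib, ← Finset.sum_smul, ← hS]
      have h6 : (∑ i, w i • z i) + (u - c) = u := by rw [hc]; abel
      rw [add_sub_assoc, h5, h6]
    rw [← hw'pt]
    exact key w' (fun i => (hw'pos i).le) hw'sum
  -- conclude
  rw [mem_intrinsicInterior]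
  refine ⟨⟨c, hcA⟩, ?_, rfl⟩
  rw [mem_interior_iff_mem_nhds, Metric.mem_nhds_iff]
  refine ⟨ε, hεpos, fun y hy => ?_⟩
  have h7 : dist y (⟨c, hcA⟩ : A) < ε := Metric.mem_ball.1 hy
  rw [Subtype.dist_eq] at h7
  exact hball (y : Fin N → ℝ) y.2 (by rwa [dist_eq_norm] at h7)


theorem aux_extend {N : ℕ} (X : Set (Fin N → ℝ)) :
    ∀ n : ℕ, ∀ C : Set (Fin N → ℝ), C ⊆ X → C.Nonempty →
      Module.finrank ℝ ↥(vectorSpan ℝ X) ≤ Module.finrank ℝ ↥(vectorSpan ℝ C) + n →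
      ∃ Zf : Finset (Fin N → ℝ), ↑Zf ⊆ X ∧
        Zf.card + Module.finrank ℝ ↥(vectorSpan ℝ C) ≤ Module.finrank ℝ ↥(vectorSpan ℝ X) ∧
        affineSpan ℝ (C ∪ ↑Zf) = affineSpan ℝ X := by
  intro n
  induction n with
  | zero =>
    intro C hCX hCne hle
    refine ⟨∅, by simp, ?_, ?_⟩
    · simpa using Submodule.finrank_mono (vectorSpan_mono ℝ hCX)
    · -- spans must already be equal
      have hmono : affineSpan ℝ C ≤ affineSpan ℝ X := affineSpan_mono ℝ hCX
      rcases eq_or_lt_of_le hmono with heq | hlt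
      · simpa using heq
      · exfalso
        have hne : ((affineSpan ℝ C : AffineSubspace ℝ (Fin N → ℝ)) : Set (Fin N → ℝ)).Nonempty := by
          rw [affineSpan_nonempty]; exact hCne
        have hdlt := AffineSubspace.direction_lt_of_nonempty hlt hne
        rw [direction_affineSpan, direction_affineSpan] at hdlt
        have := Submodule.finrank_lt_finrank_of_lt hdlt
        omega
  | succ n ih =>
    intro C hCX hCne hle
    by_cases heq : affineSpan ℝ C = affineSpan ℝ X
    · refine ⟨∅, by simp, ?_, by simpa using heq⟩
      simpa using Submodule.finrank_mono (vectorSpan_mono ℝ hCX)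
    · -- pick a point of X outside the span of C
      have hex : ∃ v ∈ X, v ∉ affineSpan ℝ C := by
        by_contra h
        push_neg at h
        apply heq
        refine le_antisymm (affineSpan_mono ℝ hCX) ?_
        rw [affineSpan_le]
        exact fun v hv => h v hv
      obtain ⟨v, hvX, hv⟩ := hex
      have hlt : affineSpan ℝ C < affineSpan ℝ (insert v C) := by
        refine lt_of_le_of_ne (affineSpan_mono ℝ (Set.subset_insert v C)) ?_
        intro h
        exact hv (h ▸ subset_affineSpan ℝ _ (Set.mem_insert v C))
      have hne : ((affineSpan ℝ C : AffineSubspace ℝ (Fin N → ℝ)) : Set (Fin N → ℝ)).Nonempty := by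
        rw [affineSpan_nonempty]; exact hCne
      have hdlt := AffineSubspace.direction_lt_of_nonempty hlt hne
      rw [direction_affineSpan, direction_affineSpan] at hdlt
      have hfrlt := Submodule.finrank_lt_finrank_of_lt hdlt
      obtain ⟨Zf', hZf'X, hZf'card, hZf'span⟩ :=
        ih (insert v C) (Set.insert_subset hvX hCX) ⟨v, Set.mem_insert v C⟩ (by omega)
      classical
      refine ⟨insert v Zf', ?_, ?_, ?_⟩
      · rw [Finset.coe_insert]
        exact Set.insert_subset hvX hZf'X
      · have := Finset.card_insert_le v Zf'
        omega
      · rw [Finset.coe_insert, Set.union_insert, ← Set.insert_union]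
        exact hZf'span

theorem toR_sub {N : ℕ} (a b : ZL N) : toR (a - b) = toR a - toR b := by
  funext i; simp [toR]

theorem toR_sum {N : ℕ} {ι : Type*} [Fintype ι] (v : ι → ZL N) :
    toR (∑ i, v i) = ∑ i, toR (v i) := by
  funext j
  simp only [toR, Finset.sum_apply, Int.cast_sum]

theorem mem_latPts_one {N : ℕ} {V : Finset (ZL N)} {v : ZL N} (hv : v ∈ V) :
    v ∈ latPts V 1 := by
  have h1 : toR v ∈ poly V := subset_convexHull ℝ _ (Set.mem_image_of_mem toR hv)
  show toR v ∈ ((1 : ℕ) : ℝ) • poly V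
  rw [Nat.cast_one, one_smul]
  exact h1

theorem aux_main {N : ℕ} (V : Finset (ZL N))
    (hdeg : ∀ k : ℕ, 1 ≤ k →
      k ≤ Module.finrank ℝ ↥(vectorSpan ℝ (poly V)) - 1 →
      ∀ x : ZL N, toR x ∉ intrinsicInterior ℝ ((k : ℝ) • poly V))
    (m : ℕ) (hm : 2 ≤ m) (x : ZL N) (hx : x ∈ latPts V m) :
    ∃ v ∈ V, x - v ∈ latPts V (m - 1) := by
  classical
  have hx' : toR x ∈ (m : ℝ) • poly V := hx
  obtain ⟨p, hp, hxp⟩ := Set.mem_smul_set.1 hx'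
  have hp' : p ∈ convexHull ℝ (toR '' (V : Set (ZL N))) := hp
  obtain ⟨ι, hι, z, w, hzV, hAI, hwpos, hwsum, hrep⟩ := eq_pos_convex_span_of_mem_convexHull hp'
  have hne : Nonempty ι := by
    by_contra h
    haveI : IsEmpty ι := not_nonempty_iff.1 h
    rw [Finset.univ_eq_empty, Finset.sum_empty] at hwsum
    exact one_ne_zero hwsum.symm
  set lam : ι → ℝ := fun i => (m : ℝ) * w i with hlam
  have hlampos : ∀ i, 0 < lam i := fun i => by
    have : (0:ℝ) < (m:ℝ) := by positivity
    exact mul_pos this (hwpos i)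
  have hlamsum : ∑ i, lam i = (m : ℝ) := by
    rw [hlam, ← Finset.mul_sum, hwsum, mul_one]
  have hlamrep : ∑ i, lam i • z i = toR x := by
    rw [← hxp, ← hrep, Finset.smul_sum]
    exact Finset.sum_congr rfl fun i _ => by rw [hlam]; simp only; rw [mul_smul]
  by_cases hbig : ∃ i, (1:ℝ) ≤ lam i
  · -- Case A : peel off a vertex
    obtain ⟨i, hi⟩ := hbig
    obtain ⟨v, hvV, hvz⟩ := hzV (Set.mem_range_self i)
    refine ⟨v, hvV, ?_⟩
    show toR (x - v) ∈ ((m - 1 : ℕ) : ℝ) • poly V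
    have hm1 : ((m - 1 : ℕ) : ℝ) = (m : ℝ) - 1 := by
      have : (1:ℕ) ≤ m := by omega
      push_cast [Nat.cast_sub this]
      ring
    set k' : ℝ := (m : ℝ) - 1 with hk'
    have hk'pos : 0 < k' := by
      rw [hk']
      have : (2:ℝ) ≤ (m:ℝ) := by exact_mod_cast hm
      linarith
    set w'' : ι → ℝ := fun j => (lam j - if j = i then 1 else 0) / k' with hw''
    have hw''nonneg : ∀ j, 0 ≤ w'' j := by
      intro j
      apply div_nonneg _ hk'pos.le
      by_cases h : j = i
      · subst h; simp [hi]
      · simp [h, (hlampos j).le]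
    have hw''sum : ∑ j, w'' j = 1 := by
      rw [hw'']
      simp only
      rw [← Finset.sum_div, Finset.sum_sub_distrib, Finset.sum_ite_eq' Finset.univ i,
        if_pos (Finset.mem_univ i), hlamsum, ← hk']
      exact div_self hk'pos.ne'
    have hq : ∑ j, w'' j • z j ∈ poly V := by
      have hcm : Finset.univ.centerMass w'' z ∈ convexHull ℝ (toR '' (V : Set (ZL N))) :=
        Finset.centerMass_mem_convexHull _ (fun j _ => hw''nonneg j) (by rw [hw''sum]; norm_num)
          (fun j _ => hzV (Set.mem_range_self j))
      have : Finset.univ.centerMass w'' z = ∑ j, w'' j • z j := by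
        rw [Finset.centerMass, hw''sum, inv_one, one_smul]
      rwa [this] at hcm
    have he : ∀ j, k' • (w'' j • z j) = lam j • z j - (if j = i then z i else 0) := by
      intro j
      have harith : k' * ((lam j - if j = i then 1 else 0) / k') =
          lam j - (if j = i then 1 else 0) := by
        field_simp
      rw [hw'']
      simp only
      rw [smul_smul, harith, sub_smul]
      by_cases hji : j = i
      · subst hji; simp
      · simp [hji]
    have hR : k' • ∑ j, w'' j • z j = (∑ j, lam j • z j) - z i := by
      rw [Finset.smul_sum, Finset.sum_congr rfl fun j _ => he j, Finset.sum_sub_distrib,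
        Finset.sum_ite_eq' Finset.univ i, if_pos (Finset.mem_univ i)]
    have hpt : toR (x - v) = k' • ∑ j, w'' j • z j := by
      rw [toR_sub, hvz, ← hlamrep, hR]
    rw [hm1, hpt]
    exact Set.smul_mem_smul_set hq
  · -- Case B : contradiction with hdeg
    exfalso
    push_neg at hbig
    set n := Fintype.card ι with hn
    have hmn : m + 1 ≤ n := by
      have h1 : (m:ℝ) < (n:ℝ) := by
        calc (m:ℝ) = ∑ i, lam i := hlamsum.symm
          _ < ∑ _i : ι, (1:ℝ) := Finset.sum_lt_sum_of_nonempty Finset.univ_nonempty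
              (fun i _ => hbig i)
          _ = (n:ℝ) := by rw [Finset.sum_const, nsmul_eq_mul, mul_one, hn, Finset.card_univ]
      exact_mod_cast Nat.succ_le_of_lt (by exact_mod_cast h1)
    set s := n - 1 with hs
    have hfr : Module.finrank ℝ ↥(vectorSpan ℝ (Set.range z)) = s :=
      hAI.finrank_vectorSpan (by omega)
    set d := Module.finrank ℝ ↥(vectorSpan ℝ (toR '' (V : Set (ZL N)))) with hd
    have hdpoly : Module.finrank ℝ ↥(vectorSpan ℝ (poly V)) = d := by
      rw [poly, ← direction_affineSpan, affineSpan_convexHull, direction_affineSpan]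
    have hsd : s ≤ d := by
      rw [← hfr, hd]
      exact Submodule.finrank_mono (vectorSpan_mono ℝ hzV)
    have hs2 : 2 ≤ s := by omega
    -- find the lattice point y with positive weights of total height h ≤ s - 1
    obtain ⟨y, mu, h, hmupos, hmusum, hyrep, hh1, hhs⟩ :
        ∃ (y : ZL N) (mu : ι → ℝ) (h : ℕ), (∀ i, 0 < mu i) ∧ (∑ i, mu i = (h:ℝ)) ∧
          (toR y = ∑ i, mu i • z i) ∧ 1 ≤ h ∧ h ≤ s - 1 := by
      rcases lt_or_ge m s with hcase | hcase
      · exact ⟨x, lam, m, hlampos, hlamsum, hlamrep.symm, by omega, by omega⟩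
      · have hms : m = s := by omega
        choose v hv1 hv2 using fun i => (hzV (Set.mem_range_self i) :
          z i ∈ toR '' (V : Set (ZL N)))
        refine ⟨(∑ i, v i) - x, fun i => 1 - lam i, 1, fun i => sub_pos.2 (hbig i), ?_, ?_,
          le_refl 1, by omega⟩
        · rw [Finset.sum_sub_distrib, hlamsum, Finset.sum_const, nsmul_eq_mul, mul_one,
            Finset.card_univ, ← hn]
          have : n = m + 1 := by omega
          rw [this]
          push_cast
          ring
        · rw [toR_sub, toR_sum]
          have he : ∀ i, toR (v i) = z i := hv2
          rw [Finset.sum_congr rfl fun i _ => he i, ← hlamrep, ← Finset.sum_sub_distrib]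
          exact Finset.sum_congr rfl fun i _ => by rw [sub_smul, one_smul]
    -- extend to an affinely spanning family
    have hrange_ne : (Set.range z).Nonempty := Set.range_nonempty z
    obtain ⟨Zf, hZfX, hZfcard, hZfspan⟩ := aux_extend (toR '' (V : Set (ZL N))) d
      (Set.range z) hzV hrange_ne (by rw [hfr]; omega)
    rw [hfr] at hZfcard
    -- lattice preimages of the extension points
    have hZfsub : ∀ j : ↥Zf, (j : Fin N → ℝ) ∈ toR '' (V : Set (ZL N)) := fun j => hZfX j.2
    choose vz hvz1 hvz2 using hZfsub
    set k' := h + Zf.card with hk'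
    have hk'1 : 1 ≤ k' := by omega
    have hk'le : k' ≤ d - 1 := by omega
    set q : ZL N := y + ∑ j : ↥Zf, vz j with hq
    -- the combined family
    set z' : ι ⊕ ↥Zf → Fin N → ℝ := Sum.elim z (fun j => (j : Fin N → ℝ)) with hz'
    set w' : ι ⊕ ↥Zf → ℝ := Sum.elim mu (fun _ => 1) with hw'
    have hw'pos : ∀ i, 0 < w' i := by
      rintro (i | j)
      · exact hmupos i
      · exact one_pos
    have hw'sum : ∑ i, w' i = (k' : ℝ) := by
      rw [hw', Fintype.sum_sum_type]
      simp only [Sum.elim_inl, Sum.elim_inr]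
      rw [hmusum, Finset.sum_const, nsmul_eq_mul, mul_one, Finset.card_univ,
        Fintype.card_coe, hk']
      push_cast
      ring
    have hz'range : Set.range z' = Set.range z ∪ ↑Zf := by
      rw [hz', Set.Sum.elim_range]
      congr 1
      exact Subtype.range_coe
    have hz'sub : Set.range z' ⊆ toR '' (V : Set (ZL N)) := by
      rw [hz'range]
      exact Set.union_subset hzV hZfX
    have hz'span : affineSpan ℝ (Set.range z') = affineSpan ℝ (toR '' (V : Set (ZL N))) := by
      rw [hz'range, hZfspan]
    have hqrep : toR q = ∑ i, w' i • z' i := by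
      rw [hq]
      have : toR (y + ∑ j : ↥Zf, vz j) = toR y + ∑ j : ↥Zf, toR (vz j) := by
        funext t
        simp only [toR, Pi.add_apply, Int.cast_add, Finset.sum_apply, Int.cast_sum]
      rw [this, Fintype.sum_sum_type]
      simp only [hw', hz', Sum.elim_inl, Sum.elim_inr, one_smul]
      rw [hyrep]
      congr 1
      exact Finset.sum_congr rfl fun j _ => (hvz2 j)
    have hk'pos : (0:ℝ) < (k' : ℝ) := by positivity
    have hmem := aux_mem_intrinsicInterior (toR '' (V : Set (ZL N))) z' hz'sub w' hw'pos
      hk'pos hw'sum hz'span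
    rw [← hqrep] at hmem
    exact hdeg k' hk'1 (by rw [hdpoly]; exact hk'le) q hmem

/-- Any lattice polytope of degree `0` or `1` is normal.  Here
`deg P ≤ 1` is expressed by its defining property: `kP` has no interior (relative
interior) lattice points for all `1 ≤ k ≤ dim P − 1`. -/
theorem stmt18 {N : ℕ} (V : Finset (ZL N))
    (hdeg : ∀ k : ℕ, 1 ≤ k →
      k ≤ Module.finrank ℝ ↥(vectorSpan ℝ (poly V)) - 1 →
      ∀ x : ZL N, toR x ∉ intrinsicInterior ℝ ((k : ℝ) • poly V)) :
    NormalPoly V := by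
  have main : ∀ k : ℕ, kNormal V (k + 1) := by
    intro k
    induction k with
    | zero =>
      intro x hx
      exact ⟨fun _ => x, fun _ => hx, by simp⟩
    | succ k ih =>
      intro x hx
      obtain ⟨v, hvV, hxv⟩ := aux_main V hdeg (k + 1 + 1) (by omega) x hx
      have hk1 : k + 1 + 1 - 1 = k + 1 := by omega
      rw [hk1] at hxv
      obtain ⟨f, hf, hfsum⟩ := ih (x - v) hxv
      refine ⟨Fin.cons v f, fun i => ?_, ?_⟩
      · refine Fin.cases ?_ (fun j => hf j) i
        exact mem_latPts_one hvV
      · rw [Fin.sum_cons, hfsum]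
        abel
  intro k hk
  obtain ⟨k', rfl⟩ : ∃ k', k = k' + 1 := ⟨k - 1, by omega⟩
  exact main k'
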